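/- Let H be a real Hilbert space with bilinear forms t, s satisfying ‖u‖² ≤ t(u,u) and s(u,v) ≤ ρ‖u‖‖v‖ for 0 ≤ ρ < 1, and let H_h ⊆ H be any closed subspace. Assume that for every bounded linear functional ℓ on H the Galerkin problem t(u_h, v_h) = s(u_h, v_h) + ℓ(v_h) for all v_h ∈ H_h has a solution u_h ∈ H_h, and that the pure transport Galerkin problems t(w_h, v_h) = g(v_h) for all v_h ∈ H_h are solvable in H_h. Then the Galerkin analogue of the accelerated iteration (half-step solving t(u_{h,k+1/2}, v_h) = s(u_{h,k}, v_h) + ℓ(v_h), followed by a residual-minimizing correction over any subspace W_h ⊆ H_h containing 0) satisfies ‖u_h − u_{h,k}‖ ≤ ρ^k ‖R_h(u_{h,0})‖/(1−ρ), where R_h is the discrete preconditioned residual defined by t(R_h(w_h), v_h) = ℓ(v_h) − t(w_h, v_h) + s(w_h, v_h) for all v_h ∈ H_h. -/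
import Mathlib


/-- Discrete convergence theorem (Theorem 5.1): the structural inequalities
`‖u‖² ≤ t(u,u)` and `s(u,v) ≤ ρ‖u‖‖v‖` are inherited by any closed Galerkin
subspace `H_h`, hence the discrete accelerated source iteration (half transport
step followed by residual minimization over any subspace `W_h ⊆ H_h`) converges
linearly with rate `ρ`: `‖u_h - u_{h,k}‖ ≤ ρ^k ‖R_h(u_{h,0})‖ / (1 - ρ)`. -/
theorem galerkin_accelerated_source_iteration_convergence
    {H : Type*} [NormedAddCommGroup H] [InnerProductSpace ℝ H] [CompleteSpace H]
    (t s : H →ₗ[ℝ] H →ₗ[ℝ] ℝ) (ρ : ℝ) (hρ0 : 0 ≤ ρ) (hρ1 : ρ < 1)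
    (ht : ∀ u : H, ‖u‖ ^ 2 ≤ t u u)
    (hs : ∀ u v : H, s u v ≤ ρ * ‖u‖ * ‖v‖)
    (Hh : Submodule ℝ H) (hHh : IsClosed (Hh : Set H))
    (hGal : ∀ g : H →L[ℝ] ℝ, ∃ wh ∈ Hh, ∀ vh ∈ Hh, t wh vh = s wh vh + g vh)
    (hTrans : ∀ g : H →L[ℝ] ℝ, ∃ wh ∈ Hh, ∀ vh ∈ Hh, t wh vh = g vh)
    (ℓ : H →L[ℝ] ℝ) (uh : H) (huhH : uh ∈ Hh)
    (huh : ∀ vh ∈ Hh, t uh vh = s uh vh + ℓ vh)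
    (Rh : H → H)
    (hRhH : ∀ w : H, Rh w ∈ Hh)
    (hRh : ∀ w : H, ∀ vh ∈ Hh, t (Rh w) vh = ℓ vh - t w vh + s w vh)
    (Wh : Submodule ℝ H) (hWh : Wh ≤ Hh)
    (useq uhalf c : ℕ → H)
    (huseqH : ∀ k, useq k ∈ Hh) (huhalfH : ∀ k, uhalf k ∈ Hh)
    (hhalf : ∀ k, ∀ vh ∈ Hh, t (uhalf k) vh = s (useq k) vh + ℓ vh)
    (hcW : ∀ k, c k ∈ Wh)
    (hmin : ∀ k, ∀ c' ∈ Wh, ‖Rh (uhalf k + c k)‖ ≤ ‖Rh (uhalf k + c')‖)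
    (hstep : ∀ k, useq (k + 1) = uhalf k + c k) :
    ∀ k, ‖uh - useq k‖ ≤ ρ ^ k * ‖Rh (useq 0)‖ / (1 - ρ) := by
  have h1ρ : 0 < 1 - ρ := by linarith
  -- helper: from coercivity, t v v ≤ C‖v‖ with C ≥ 0 gives ‖v‖ ≤ C
  have key : ∀ (v : H) (C : ℝ), 0 ≤ C → t v v ≤ C * ‖v‖ → ‖v‖ ≤ C := by
    intro v C hC hv
    rcases eq_or_lt_of_le (norm_nonneg v) with h | h
    · rw [← h]; exact hC
    · have h2 := (ht v).trans hv
      nlinarith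
  -- Lemma A: error bounded by residual
  have errb : ∀ w ∈ Hh, ‖uh - w‖ ≤ ‖Rh w‖ / (1 - ρ) := by
    intro w hw
    set e := uh - w with he
    set v := e - Rh w with hv
    have hvH : v ∈ Hh := Hh.sub_mem (Hh.sub_mem huhH hw) (hRhH w)
    have htv : t v v = s e v := by
      have h1 : t uh v = s uh v + ℓ v := huh v hvH
      have h2 : t (Rh w) v = ℓ v - t w v + s w v := hRh w v hvH
      have e1 : t v v = t e v - t (Rh w) v := by rw [hv]; simp
      have e2 : t e v = t uh v - t w v := by rw [he]; simp
      have e3 : s e v = s uh v - s w v := by rw [he]; simp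
      rw [e1, e2, e3, h1, h2]; ring
    have hle : ‖v‖ ≤ ρ * ‖e‖ := by
      apply key v (ρ * ‖e‖) (by positivity)
      rw [htv]
      calc s e v ≤ ρ * ‖e‖ * ‖v‖ := hs e v
        _ = ρ * ‖e‖ * ‖v‖ := rfl
    have hsum : ‖e‖ ≤ ‖Rh w‖ + ρ * ‖e‖ := by
      have : e = Rh w + v := by rw [hv]; abel
      calc ‖e‖ = ‖Rh w + v‖ := by rw [← this]
        _ ≤ ‖Rh w‖ + ‖v‖ := norm_add_le _ _
        _ ≤ ‖Rh w‖ + ρ * ‖e‖ := by linarith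
    rw [le_div_iff₀ h1ρ]; nlinarith
  -- Lemma B: Rh (useq k) = uhalf k - useq k
  have resB : ∀ k, Rh (useq k) = uhalf k - useq k := by
    intro k
    set d := uhalf k - useq k - Rh (useq k) with hd
    have hdH : d ∈ Hh := Hh.sub_mem (Hh.sub_mem (huhalfH k) (huseqH k)) (hRhH _)
    have htd : t d d = 0 := by
      have h1 : t (uhalf k) d = s (useq k) d + ℓ d := hhalf k d hdH
      have h2 : t (Rh (useq k)) d = ℓ d - t (useq k) d + s (useq k) d :=
        hRh (useq k) d hdH
      have e1 : t d d = t (uhalf k) d - t (useq k) d - t (Rh (useq k)) d := by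
        rw [hd]; simp
      rw [e1, h1, h2]; ring
    have : ‖d‖ ≤ 0 := key d 0 le_rfl (by rw [htd, zero_mul])
    have hd0 : d = 0 := by
      have := norm_nonneg d
      exact norm_eq_zero.mp (le_antisymm ‹‖d‖ ≤ 0› this)
    have : uhalf k - useq k - Rh (useq k) = 0 := hd0
    linear_combination (norm := abel_nf) -this
  -- Lemma C: residual contraction
  have resC : ∀ k, ‖Rh (useq (k + 1))‖ ≤ ρ * ‖Rh (useq k)‖ := by
    intro k
    have hmin0 : ‖Rh (useq (k + 1))‖ ≤ ‖Rh (uhalf k)‖ := by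
      rw [hstep k]
      simpa using hmin k 0 Wh.zero_mem
    have hhalfres : ‖Rh (uhalf k)‖ ≤ ρ * ‖Rh (useq k)‖ := by
      apply key _ _ (by positivity)
      set r := Rh (uhalf k) with hr
      have hrH : r ∈ Hh := hRhH _
      have h1 : t (uhalf k) r = s (useq k) r + ℓ r := hhalf k r hrH
      have h2 : t r r = ℓ r - t (uhalf k) r + s (uhalf k) r := hRh (uhalf k) r hrH
      have h3 : t r r = s (uhalf k - useq k) r := by
        have e1 : s (uhalf k - useq k) r = s (uhalf k) r - s (useq k) r := by simp
        rw [e1, h2, h1]; ring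
      rw [h3]
      calc s (uhalf k - useq k) r ≤ ρ * ‖uhalf k - useq k‖ * ‖r‖ := hs _ _
        _ = ρ * ‖Rh (useq k)‖ * ‖r‖ := by rw [resB k]
    exact hmin0.trans hhalfres
  -- induction: residual bound
  have resk : ∀ k, ‖Rh (useq k)‖ ≤ ρ ^ k * ‖Rh (useq 0)‖ := by
    intro k
    induction k with
    | zero => simp
    | succ n ih =>
      calc ‖Rh (useq (n + 1))‖ ≤ ρ * ‖Rh (useq n)‖ := resC n
        _ ≤ ρ * (ρ ^ n * ‖Rh (useq 0)‖) := by
            exact mul_le_mul_of_nonneg_left ih hρ0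
        _ = ρ ^ (n + 1) * ‖Rh (useq 0)‖ := by ring
  intro k
  calc ‖uh - useq k‖ ≤ ‖Rh (useq k)‖ / (1 - ρ) := errb _ (huseqH k)
    _ ≤ ρ ^ k * ‖Rh (useq 0)‖ / (1 - ρ) := by
        gcongr
        exact resk k
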